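/- Let L ⊆ ℤⁿ be a zonotopal lattice, let (·,·) be a weighted inner product on ℝⁿ, let F = span_ℝ(L), and let π : ℝⁿ → F be the orthogonal projection onto F with respect to (·,·). Then the Dirichlet–Voronoi polytope of L satisfies DV(L) = π([−1/2, 1/2]ⁿ); in particular DV(L) is a zonotope, namely the image under π of the cube [−1/2, 1/2]ⁿ. -/

import Mathlib

/-- The support of an integer vector: the set of its nonzero coordinates. -/
def supp {n : ℕ} (v : Fin n → ℤ) : Set (Fin n) := {i | v i ≠ 0}

/-- `v` is an elementary vector of the lattice `L ⊆ ℤⁿ`: it is a nonzero lattice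
vector with entries in `{-1,0,+1}` whose support is minimal among supports of
nonzero lattice vectors. -/
def IsElementary {n : ℕ} (L : AddSubgroup (Fin n → ℤ)) (v : Fin n → ℤ) : Prop :=
  v ∈ L ∧ v ≠ 0 ∧ (∀ i, v i = -1 ∨ v i = 0 ∨ v i = 1) ∧
    ∀ u ∈ L, u ≠ 0 → ¬ (supp u ⊂ supp v)

/-- A lattice `L ⊆ ℤⁿ` is zonotopal if every nonzero lattice vector's support
contains the support of some elementary vector. -/
def IsZonotopal {n : ℕ} (L : AddSubgroup (Fin n → ℤ)) : Prop :=
  ∀ v ∈ L, v ≠ 0 → ∃ u, IsElementary L u ∧ supp u ⊆ supp v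

/-- The weighted inner product on `ℝⁿ` with weights `lam`. -/
def wip {n : ℕ} (lam : Fin n → ℝ) (x y : Fin n → ℝ) : ℝ := ∑ i, lam i * x i * y i

/-- Coordinatewise cast of an integer vector to a real vector. -/
def icast {n : ℕ} (v : Fin n → ℤ) : Fin n → ℝ := fun i => (v i : ℝ)

/-- The real span `F` of a lattice `L ⊆ ℤⁿ`. -/
def latticeSpan {n : ℕ} (L : AddSubgroup (Fin n → ℤ)) : Submodule ℝ (Fin n → ℝ) :=
  Submodule.span ℝ (icast '' (L : Set (Fin n → ℤ)))

/-- The Dirichlet-Voronoi polytope of a lattice `L ⊆ ℤⁿ` with respect to the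
weighted inner product with weights `lam`. -/
def DV {n : ℕ} (L : AddSubgroup (Fin n → ℤ)) (lam : Fin n → ℝ) : Set (Fin n → ℝ) :=
  {x | x ∈ latticeSpan L ∧
    ∀ v ∈ L, wip lam x (icast v) ≤ wip lam (icast v) (icast v) / 2}

/-- `v` is a strict Voronoi vector of `L` with respect to the weighted inner
product with weights `lam`: `±v` are the unique shortest vectors of `v + 2L`. -/
def IsStrictVoronoi {n : ℕ} (L : AddSubgroup (Fin n → ℤ)) (lam : Fin n → ℝ)
    (v : Fin n → ℤ) : Prop :=
  v ∈ L ∧ v ≠ 0 ∧ ∀ w ∈ L, v + 2 • w ≠ v → v + 2 • w ≠ -v →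
    wip lam (icast v) (icast v) <
      wip lam (icast (v + 2 • w)) (icast (v + 2 • w))

/-- Two integer vectors are conformal if their entries never have opposite signs. -/
def IsConformal {n : ℕ} (v w : Fin n → ℤ) : Prop := ∀ i, 0 ≤ v i * w i

/-- The sign of a real number, as an integer in `{-1,0,+1}`. -/
noncomputable def sgnR (t : ℝ) : ℤ := if 0 < t then 1 else if t < 0 then -1 else 0

/-- A covector of the vector configuration `X`: the sign vector of the values of a
linear functional on the configuration. -/
def IsCovector {n d : ℕ} (X : Fin n → Fin d → ℝ) (s : Fin n → ℤ) : Prop :=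
  ∃ f : (Fin d → ℝ) →ₗ[ℝ] ℝ, ∀ i, s i = sgnR (f (X i))

/-- A cocircuit of the vector configuration `X`: a nonzero covector of minimal support. -/
def IsCocircuit {n d : ℕ} (X : Fin n → Fin d → ℝ) (s : Fin n → ℤ) : Prop :=
  IsCovector X s ∧ s ≠ 0 ∧ ∀ t, IsCovector X t → t ≠ 0 → ¬ (supp t ⊂ supp s)

/-- The lattice in `ℤⁿ` generated by the cocircuits of `X`. -/
def cocircuitLattice {n d : ℕ} (X : Fin n → Fin d → ℝ) : AddSubgroup (Fin n → ℤ) :=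
  AddSubgroup.closure {s | IsCocircuit X s}

/-- A linear subspace of `ℝ^d` spanned by a subset of the configuration `X`. -/
def SpannedSubspace {n d : ℕ} (X : Fin n → Fin d → ℝ)
    (W : Submodule ℝ (Fin d → ℝ)) : Prop :=
  ∃ S : Set (Fin n), W = Submodule.span ℝ (X '' S)

/-- McMullen's condition (II): every `(d-2)`-dimensional subspace spanned by vectors
of `X` is contained in exactly `2` or `3` hyperplanes spanned by vectors of `X`. -/
def ConditionII {n d : ℕ} (X : Fin n → Fin d → ℝ) : Prop :=
  ∀ W : Submodule ℝ (Fin d → ℝ), SpannedSubspace X W → Module.finrank ℝ W = d - 2 →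
    {H : Submodule ℝ (Fin d → ℝ) |
        SpannedSubspace X H ∧ Module.finrank ℝ H = d - 1 ∧ W ≤ H}.ncard = 2 ∨
    {H : Submodule ℝ (Fin d → ℝ) |
        SpannedSubspace X H ∧ Module.finrank ℝ H = d - 1 ∧ W ≤ H}.ncard = 3

/-- The zonotope generated by the vector configuration `X`, i.e. the Minkowski sum
of the segments `conv{xᵢ, -xᵢ}`. -/
def zonotope {n d : ℕ} (X : Fin n → Fin d → ℝ) : Set (Fin d → ℝ) :=
  {z | ∃ c : Fin n → ℝ, (∀ i, |c i| ≤ 1) ∧ z = ∑ i, c i • X i}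

/-- `P` tiles `ℝ^d` face-to-face by translations: some family of translates of `P`
covers `ℝ^d`, and any two distinct translates intersect in a common (possibly empty)
exposed face. -/
def TilesFaceToFace {d : ℕ} (P : Set (Fin d → ℝ)) : Prop :=
  ∃ T : Set (Fin d → ℝ),
    (∀ x, ∃ t ∈ T, x ∈ (t + ·) '' P) ∧
    ∀ s ∈ T, ∀ t ∈ T, s ≠ t →
      IsExposed ℝ ((s + ·) '' P) (((s + ·) '' P) ∩ ((t + ·) '' P)) ∧
      IsExposed ℝ ((t + ·) '' P) (((s + ·) '' P) ∩ ((t + ·) '' P))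

lemma supp_neg {n : ℕ} (v : Fin n → ℤ) : supp (-v) = supp v := by
  ext i; simp [supp]

lemma IsElementary.neg {n : ℕ} {L : AddSubgroup (Fin n → ℤ)} {v : Fin n → ℤ}
    (h : IsElementary L v) : IsElementary L (-v) := by
  obtain ⟨h1, h2, h3, h4⟩ := h
  refine ⟨neg_mem h1, by simpa using h2, fun i => ?_, by simpa [supp_neg] using h4⟩
  rcases h3 i with h | h | h <;> simp [h]

/-- Key combinatorial lemma: a zonotopal lattice has, inside the support of any
nonzero vector, an elementary vector conformal to it. -/
lemma exists_conformal_elem {n : ℕ} {L : AddSubgroup (Fin n → ℤ)} (hL : IsZonotopal L) :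
    ∀ N : ℕ, ∀ v ∈ L, v ≠ 0 → (Finset.univ.filter (fun i => v i ≠ 0)).card ≤ N →
      ∃ e, IsElementary L e ∧ supp e ⊆ supp v ∧ ∀ i, 0 ≤ e i * v i := by
  intro N
  induction N with
  | zero =>
    intro v hv hv0 hc
    exfalso
    obtain ⟨i, hi⟩ := Function.ne_iff.mp hv0
    have : i ∈ Finset.univ.filter (fun i => v i ≠ 0) := by simpa using hi
    have := Finset.card_pos.mpr ⟨i, this⟩
    omega
  | succ N ih =>
    intro v hv hv0 hc
    obtain ⟨e, he, hse⟩ := hL v hv hv0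
    by_cases hconf : ∀ i, 0 ≤ e i * v i
    · exact ⟨e, he, hse, hconf⟩
    by_cases hconf' : ∀ i, 0 ≤ (-e) i * v i
    · exact ⟨-e, he.neg, by rwa [supp_neg], hconf'⟩
    push_neg at hconf hconf'
    obtain ⟨i0, hi0⟩ := hconf'
    have hi0' : 0 < e i0 * v i0 := by
      simp only [Pi.neg_apply, neg_mul] at hi0; linarith
    set A := Finset.univ.filter (fun j => e j * v j < 0) with hA
    have hAne : A.Nonempty := by
      obtain ⟨j, hj⟩ := hconf
      exact ⟨j, by simp [hA]; linarith⟩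
    obtain ⟨j, hjA, hjmin⟩ := A.exists_min_image (fun j => |v j|) hAne
    have hjlt : e j * v j < 0 := by simpa [hA] using hjA
    -- supp e ⊆ supp v as implication
    have hsev : ∀ i, v i = 0 → e i = 0 := by
      intro i hvi
      by_contra h
      exact (hse (show i ∈ supp e from h)) hvi
    set w : Fin n → ℤ := v + |v j| • e with hwdef
    have hwi : ∀ i, w i = v i + |v j| * e i := fun i => by
      simp [hwdef, smul_eq_mul]
    have hwL : w ∈ L := add_mem hv (zsmul_mem he.1 _)
    -- per-coordinate facts
    have key : ∀ i, (v i = 0 → w i = 0) ∧ 0 ≤ w i * v i ∧ (w i ≠ 0 → v i ≠ 0) := by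
      intro i
      rcases he.2.2.1 i with h | h | h
      · -- e i = -1
        have hvi : v i ≠ 0 := hse (show i ∈ supp e by simp [supp, h])
        rcases lt_or_gt_of_ne hvi with hv1 | hv1
        · -- v i < 0, e i = -1, so e i * v i > 0 : w i = v i - |v j| < 0
          refine ⟨fun hh => absurd hh hvi, ?_, fun _ => hvi⟩
          have : w i = v i - |v j| := by rw [hwi, h]; ring
          nlinarith [abs_nonneg (v j)]
        · -- v i > 0, e i = -1 : anti coordinate, i ∈ A
          have hiA : i ∈ A := by simp [hA, h]; nlinarith
          have hmin : |v j| ≤ |v i| := hjmin i hiA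
          have : w i = v i - |v j| := by rw [hwi, h]; ring
          have habs : |v i| = v i := abs_of_pos hv1
          constructor
          · intro hh; exact absurd hh (ne_of_gt hv1)
          constructor
          · nlinarith
          · intro _; exact hvi
      · -- e i = 0
        have : w i = v i := by rw [hwi, h]; ring
        rw [this]
        exact ⟨fun hh => hh, by nlinarith, fun hh => hh⟩
      · -- e i = 1
        have hvi : v i ≠ 0 := hse (show i ∈ supp e by simp [supp, h])
        rcases lt_or_gt_of_ne hvi with hv1 | hv1
        · -- v i < 0, e i = 1 : anti, i ∈ A
          have hiA : i ∈ A := by simp [hA, h]; nlinarith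
          have hmin : |v j| ≤ |v i| := hjmin i hiA
          have : w i = v i + |v j| := by rw [hwi, h]; ring
          have habs : |v i| = -v i := abs_of_neg hv1
          exact ⟨fun hh => absurd hh hvi, by nlinarith, fun _ => hvi⟩
        · have : w i = v i + |v j| := by rw [hwi, h]; ring
          refine ⟨fun hh => absurd hh (ne_of_gt hv1), ?_, fun _ => hvi⟩
          nlinarith [abs_nonneg (v j)]
    -- w j = 0
    have hwj : w j = 0 := by
      rcases he.2.2.1 j with h | h | h
      · have : 0 < v j := by nlinarith
        rw [hwi, h, abs_of_pos this]; ring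
      · rw [h] at hjlt; simp at hjlt
      · have : v j < 0 := by nlinarith
        rw [hwi, h, abs_of_neg this]; ring
    -- w ≠ 0
    have hw0 : w ≠ 0 := by
      intro hh
      have hwi0 : w i0 = 0 := by rw [hh]; rfl
      rcases he.2.2.1 i0 with h | h | h
      · have hv1 : v i0 < 0 := by nlinarith
        rw [hwi, h] at hwi0
        nlinarith [abs_nonneg (v j)]
      · rw [h] at hi0'; simp at hi0'
      · have hv1 : 0 < v i0 := by nlinarith
        rw [hwi, h] at hwi0
        nlinarith [abs_nonneg (v j)]
    -- card decrease
    have hvj : v j ≠ 0 := by intro hh; rw [hh] at hjlt; simp at hjlt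
    have hsubset : Finset.univ.filter (fun i => w i ≠ 0) ⊂ Finset.univ.filter (fun i => v i ≠ 0) := by
      refine Finset.ssubset_iff_of_subset ?_ |>.mpr ⟨j, by simpa using hvj, by simpa using hwj⟩
      intro i hi
      simp only [Finset.mem_filter, Finset.mem_univ, true_and] at hi ⊢
      exact (key i).2.2 hi
    have hcard : (Finset.univ.filter (fun i => w i ≠ 0)).card ≤ N := by
      have := Finset.card_lt_card hsubset
      omega
    obtain ⟨e', he', hse', hconf'⟩ := ih w hwL hw0 hcard
    refine ⟨e', he', ?_, ?_⟩
    · intro i hi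
      have hwne : w i ≠ 0 := hse' hi
      exact (key i).2.2 hwne
    · intro i
      by_cases hei : e' i = 0
      · simp [hei]
      · have hwne : w i ≠ 0 := hse' hei
        have h1 : 0 ≤ e' i * w i := hconf' i
        have h2 : 0 ≤ w i * v i := (key i).2.1
        nlinarith [sq_nonneg (w i), mul_self_pos.mpr hwne]



lemma exists_conformal_elem_all {n : ℕ} {L : AddSubgroup (Fin n → ℤ)} (hL : IsZonotopal L) :
    ∀ v ∈ L, v ≠ 0 → ∃ e, IsElementary L e ∧ supp e ⊆ supp v ∧ ∀ i, 0 ≤ e i * v i :=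
  fun v hv hv0 => exists_conformal_elem hL _ v hv hv0 le_rfl

lemma wip_comm {n : ℕ} (lam x y : Fin n → ℝ) : wip lam x y = wip lam y x := by
  unfold wip; exact Finset.sum_congr rfl fun i _ => by ring

lemma wip_add_right {n : ℕ} (lam x a b : Fin n → ℝ) :
    wip lam x (a + b) = wip lam x a + wip lam x b := by
  unfold wip; rw [← Finset.sum_add_distrib]
  exact Finset.sum_congr rfl fun i _ => by simp [Pi.add_apply]; ring

lemma wip_sub_right {n : ℕ} (lam x a b : Fin n → ℝ) :
    wip lam x (a - b) = wip lam x a - wip lam x b := by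
  unfold wip; rw [← Finset.sum_sub_distrib]
  exact Finset.sum_congr rfl fun i _ => by simp [Pi.sub_apply]; ring

lemma wip_smul_right {n : ℕ} (lam x a : Fin n → ℝ) (c : ℝ) :
    wip lam x (c • a) = c * wip lam x a := by
  unfold wip; rw [Finset.mul_sum]
  exact Finset.sum_congr rfl fun i _ => by simp [Pi.smul_apply]; ring

/-- Lemma B: the DV inequality extends from `½(v,v)` to the `½ Σ λᵢ|vᵢ|` bound. -/
lemma dv_ineq_int {n : ℕ} {L : AddSubgroup (Fin n → ℤ)} (hL : IsZonotopal L)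
    {lam : Fin n → ℝ} {x : Fin n → ℝ}
    (hx : ∀ v ∈ L, wip lam x (icast v) ≤ wip lam (icast v) (icast v) / 2) :
    ∀ M : ℕ, ∀ v ∈ L, (∑ i, (v i).natAbs) ≤ M →
      wip lam x (icast v) ≤ (∑ i, lam i * |(v i : ℝ)|) / 2 := by
  intro M
  induction M with
  | zero =>
    intro v hv hM
    have hv0 : v = 0 := by
      funext i
      have : (v i).natAbs = 0 := by
        have h2 : (v i).natAbs ≤ 0 := le_trans (Finset.single_le_sum (f := fun i => (v i).natAbs)
          (fun i _ => Nat.zero_le _) (Finset.mem_univ i)) hM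
        omega
      simpa [Int.natAbs_eq_zero] using this
    subst hv0
    simp [wip, icast]
  | succ M ih =>
    intro v hv hM
    by_cases hv0 : v = 0
    · subst hv0; simp [wip, icast]
    obtain ⟨e, he, hse, hconf⟩ := exists_conformal_elem_all hL v hv hv0
    set v' := v - e with hv'def
    have hv'L : v' ∈ L := sub_mem hv he.1
    -- per-coordinate natAbs identity
    have hkey : ∀ i, (v' i).natAbs + (e i).natAbs = (v i).natAbs := by
      intro i
      rcases he.2.2.1 i with h | h | h
      · have hvi : v i ≠ 0 := hse (show i ∈ supp e by simp [supp, h])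
        have hc := hconf i
        have hv'i : v' i = v i - e i := by simp [hv'def]
        rw [h] at hc hv'i ⊢
        omega
      · have hv'i : v' i = v i - e i := by simp [hv'def]
        rw [h] at hv'i ⊢; omega
      · have hvi : v i ≠ 0 := hse (show i ∈ supp e by simp [supp, h])
        have hc := hconf i
        have hv'i : v' i = v i - e i := by simp [hv'def]
        rw [h] at hc hv'i ⊢
        omega
    -- e nonzero gives sum bound
    have hesum : 1 ≤ ∑ i, (e i).natAbs := by
      obtain ⟨i, hi⟩ := Function.ne_iff.mp he.2.1
      have h1 : 1 ≤ (e i).natAbs := by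
        simp only [Pi.zero_apply] at hi; omega
      calc 1 ≤ (e i).natAbs := h1
        _ ≤ _ := Finset.single_le_sum (f := fun i => (e i).natAbs)
          (fun i _ => Nat.zero_le _) (Finset.mem_univ i)
    have hsum : (∑ i, (v' i).natAbs) + (∑ i, (e i).natAbs) = ∑ i, (v i).natAbs := by
      rw [← Finset.sum_add_distrib]
      exact Finset.sum_congr rfl fun i _ => hkey i
    have hM' : (∑ i, (v' i).natAbs) ≤ M := by omega
    have hih := ih v' hv'L hM'
    -- split wip
    have hsplit : icast v = icast e + icast v' := by
      funext i; simp [icast, hv'def]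
    have he2 : wip lam x (icast e) ≤ (∑ i, lam i * |((e i : ℤ) : ℝ)|) / 2 := by
      have := hx e he.1
      have heq : wip lam (icast e) (icast e) = ∑ i, lam i * |((e i : ℤ) : ℝ)| := by
        unfold wip
        refine Finset.sum_congr rfl fun i _ => ?_
        rcases he.2.2.1 i with h | h | h <;> simp [icast, h] <;> ring
      linarith [this, heq ▸ this]
    have habs : ∀ i, |((v i : ℤ) : ℝ)| = |((e i : ℤ) : ℝ)| + |((v' i : ℤ) : ℝ)| := by
      intro i
      have h1 := hkey i
      have hz : |v i| = |e i| + |v' i| := by rw [Int.abs_eq_natAbs, Int.abs_eq_natAbs, Int.abs_eq_natAbs]; omega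
      calc |((v i : ℤ) : ℝ)| = ((|v i| : ℤ) : ℝ) := by rw [Int.cast_abs]
        _ = _ := by rw [hz]; push_cast [Int.cast_abs]; ring
    calc wip lam x (icast v) = wip lam x (icast e) + wip lam x (icast v') := by
          rw [hsplit, wip_add_right]
      _ ≤ (∑ i, lam i * |((e i : ℤ) : ℝ)|) / 2 + (∑ i, lam i * |((v' i : ℤ) : ℝ)|) / 2 := by
          linarith
      _ = (∑ i, lam i * |((v i : ℤ) : ℝ)|) / 2 := by
          rw [← add_div, ← Finset.sum_add_distrib]
          congr 1
          exact Finset.sum_congr rfl fun i _ => by rw [habs i]; ring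



lemma dv_ineq_int_wrap {n : ℕ} {L : AddSubgroup (Fin n → ℤ)} (hL : IsZonotopal L)
    {lam : Fin n → ℝ} {x : Fin n → ℝ}
    (hx : ∀ v ∈ L, wip lam x (icast v) ≤ wip lam (icast v) (icast v) / 2) :
    ∀ v ∈ L, wip lam x (icast v) ≤ (∑ i, lam i * |((v i : ℤ) : ℝ)|) / 2 :=
  fun v hv => dv_ineq_int hL hx (∑ i, (v i).natAbs) v hv le_rfl

/-- Lemma C: the support-function inequality on the whole real span. -/
lemma dv_ineq_real {n : ℕ} {L : AddSubgroup (Fin n → ℤ)} (hL : IsZonotopal L)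
    {lam : Fin n → ℝ} {x : Fin n → ℝ}
    (hx : ∀ v ∈ L, wip lam x (icast v) ≤ wip lam (icast v) (icast v) / 2) :
    ∀ u ∈ latticeSpan L, wip lam x u ≤ (∑ i, lam i * |u i|) / 2 := by
  intro u hu
  rw [latticeSpan, Submodule.mem_span_set'] at hu
  obtain ⟨k, f, g, hg⟩ := hu
  -- choose integer vectors
  choose vv hvvL hvv using fun j : Fin k => (g j).2
  -- the function of coefficients
  set Φ : (Fin k → ℝ) → ℝ := fun c =>
    (∑ i, lam i * |∑ j, c j * ((vv j i : ℤ) : ℝ)|) / 2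
      - wip lam x (fun i => ∑ j, c j * ((vv j i : ℤ) : ℝ)) with hΦ
  have hΦcont : Continuous Φ := by
    apply Continuous.sub
    · apply Continuous.div_const
      apply continuous_finset_sum
      intro i _
      exact (continuous_const.mul ((continuous_finset_sum _
        (fun j _ => (continuous_apply j).mul continuous_const)).abs))
    · unfold wip
      apply continuous_finset_sum
      intro i _
      exact (continuous_const.mul (continuous_finset_sum _
        (fun j _ => (continuous_apply j).mul continuous_const)))
  -- nonneg on rational coefficients
  have hrat : ∀ q : Fin k → ℚ, 0 ≤ Φ (fun j => (q j : ℝ)) := by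
    intro q
    set N : ℤ := ∏ j, ((q j).den : ℤ) with hN
    have hNpos : 0 < N := Finset.prod_pos fun j _ => by exact_mod_cast (q j).den_pos
    have hdvd : ∀ j, ((q j).den : ℤ) ∣ N := fun j =>
      Finset.dvd_prod_of_mem _ (Finset.mem_univ j)
    set m : Fin k → ℤ := fun j => (q j).num * (N / ((q j).den : ℤ)) with hm
    have hmq : ∀ j, (m j : ℚ) = q j * (N : ℚ) := by
      intro j
      have h1 : (N / ((q j).den : ℤ)) * ((q j).den : ℤ) = N := Int.ediv_mul_cancel (hdvd j)
      have h2 : ((q j).den : ℚ) ≠ 0 := by exact_mod_cast (q j).den_nz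
      have hq : q j * ((q j).den : ℚ) = ((q j).num : ℚ) := by
        exact (eq_div_iff h2).mp (Rat.num_div_den (q j)).symm
      refine mul_right_cancel₀ h2 ?_
      have hz : m j * ((q j).den : ℤ) = (q j).num * N := by
        rw [hm]
        calc (q j).num * (N / ((q j).den : ℤ)) * ((q j).den : ℤ)
            = (q j).num * ((N / ((q j).den : ℤ)) * ((q j).den : ℤ)) := by ring
          _ = (q j).num * N := by rw [h1]
      calc (m j : ℚ) * ((q j).den : ℚ) = ((m j * (q j).den : ℤ) : ℚ) := by push_cast; ring
        _ = (((q j).num * N : ℤ) : ℚ) := by rw [hz]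
        _ = q j * (N : ℚ) * ((q j).den : ℚ) := by push_cast; rw [← hq]; ring
    set w : Fin n → ℤ := fun i => ∑ j, m j * vv j i with hw
    have hwL : w ∈ L := by
      have : w = ∑ j, m j • vv j := by
        funext i; simp [hw, Finset.sum_apply]
      rw [this]
      exact sum_mem fun j _ => zsmul_mem (hvvL j) _
    have hscale : ∀ i, ((w i : ℤ) : ℝ) = N * ∑ j, (q j : ℝ) * ((vv j i : ℤ) : ℝ) := by
      intro i
      rw [hw]
      push_cast
      rw [Finset.mul_sum]
      refine Finset.sum_congr rfl fun j _ => ?_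
      have := hmq j
      have hr : (m j : ℝ) = (q j : ℝ) * (N : ℝ) := by exact_mod_cast congrArg (fun t : ℚ => (t : ℝ)) this
      rw [hr]; ring
    have hint := dv_ineq_int_wrap hL hx w hwL
    -- rewrite both sides
    have hNR : (0 : ℝ) < (N : ℝ) := by exact_mod_cast hNpos
    rw [hΦ]
    simp only []
    have hws : icast w = (N : ℝ) • (fun i => ∑ j, (q j : ℝ) * ((vv j i : ℤ) : ℝ)) := by
      funext i; simp [icast, hscale i]
    have h1 : wip lam x (icast w)
        = (N : ℝ) * wip lam x (fun i => ∑ j, (q j : ℝ) * ((vv j i : ℤ) : ℝ)) := by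
      rw [hws]
      unfold wip
      rw [Finset.mul_sum]
      exact Finset.sum_congr rfl fun i _ => by simp [Pi.smul_apply]; ring
    have h2 : (∑ i, lam i * |((w i : ℤ) : ℝ)|)
        = (N : ℝ) * ∑ i, lam i * |∑ j, (q j : ℝ) * ((vv j i : ℤ) : ℝ)| := by
      rw [Finset.mul_sum]
      refine Finset.sum_congr rfl fun i _ => ?_
      rw [hscale i, abs_mul, abs_of_pos hNR]; ring
    rw [h1, h2] at hint
    nlinarith
  -- density
  have hdense : Dense (Set.range (fun q : Fin k → ℚ => (fun j => (q j : ℝ) : Fin k → ℝ))) := by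
    have : Set.range (fun q : Fin k → ℚ => (fun j => (q j : ℝ) : Fin k → ℝ))
        = Set.pi Set.univ (fun _ : Fin k => Set.range ((↑) : ℚ → ℝ)) := by
      ext c
      constructor
      · rintro ⟨q, rfl⟩ j _; exact ⟨q j, rfl⟩
      · intro hc
        choose q hq using fun j => hc j (Set.mem_univ j)
        exact ⟨q, funext hq⟩
    rw [this]
    exact dense_pi Set.univ fun i _ => Rat.denseRange_cast
  have hclosed : IsClosed {c : Fin k → ℝ | 0 ≤ Φ c} := isClosed_le continuous_const hΦcont
  have hall : ∀ c : Fin k → ℝ, 0 ≤ Φ c := by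
    intro c
    have hsub : Set.range (fun q : Fin k → ℚ => (fun j => (q j : ℝ) : Fin k → ℝ))
        ⊆ {c : Fin k → ℝ | 0 ≤ Φ c} := by
      rintro _ ⟨q, rfl⟩; exact hrat q
    have := hclosed.closure_subset_iff.mpr hsub
    rw [hdense.closure_eq] at this
    exact this (Set.mem_univ c)
  -- apply at the real coefficients
  have hu' : u = fun i => ∑ j, f j * ((vv j i : ℤ) : ℝ) := by
    funext i
    rw [← hg]
    simp only [Finset.sum_apply, Pi.smul_apply, smul_eq_mul]
    refine Finset.sum_congr rfl fun j _ => ?_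
    rw [← hvv j]; rfl
  have := hall f
  rw [hΦ] at this
  simp only [] at this
  rw [hu']
  linarith [this]



section Main
variable {n : ℕ}

lemma wip_sub_left (lam a b c : Fin n → ℝ) :
    wip lam (a - b) c = wip lam a c - wip lam b c := by
  rw [wip_comm, wip_sub_right, wip_comm lam c a, wip_comm lam c b]

lemma wip_self_zero {lam : Fin n → ℝ} (hlam : ∀ i, 0 < lam i) {d : Fin n → ℝ}
    (h : wip lam d d = 0) : d = 0 := by
  funext i
  have hterm : ∀ j ∈ Finset.univ, (0:ℝ) ≤ lam j * d j * d j := fun j _ => by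
    nlinarith [mul_nonneg (hlam j).le (sq_nonneg (d j)), sq_nonneg (d j)]
  have h0 : lam i * d i * d i = 0 := by
    by_contra hne
    have hpos : 0 < lam i * d i * d i := lt_of_le_of_ne (hterm i (Finset.mem_univ i)) (Ne.symm hne)
    have : 0 < wip lam d d := by
      unfold wip
      exact Finset.sum_pos' hterm ⟨i, Finset.mem_univ i, hpos⟩
    linarith
  have hne : lam i ≠ 0 := ne_of_gt (hlam i)
  have h4 : d i * d i = 0 := by
    rcases mul_eq_zero.mp (by linarith [h0] : lam i * (d i * d i) = 0) with h | h
    · exact absurd h hne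
    · exact h
  simpa using mul_self_eq_zero.mp h4


/-- The Dirichlet-Voronoi polytope of a zonotopal lattice `L` (for a
weighted inner product) is the image of the cube `[-1/2, 1/2]ⁿ` under the orthogonal
projection `π` onto the real span of `L`; in particular it is a zonotope. -/
theorem DV_eq_proj_cube {n : ℕ} (L : AddSubgroup (Fin n → ℤ)) (hL : IsZonotopal L)
    (lam : Fin n → ℝ) (hlam : ∀ i, 0 < lam i)
    (proj : (Fin n → ℝ) →ₗ[ℝ] (Fin n → ℝ))
    (hmem : ∀ z, proj z ∈ latticeSpan L)
    (horth : ∀ z, ∀ w ∈ latticeSpan L, wip lam (z - proj z) w = 0) :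
    DV L lam = proj '' {z | ∀ i, |z i| ≤ 1/2} := by
  have hsplit : ∀ z y, wip lam z y = wip lam (z - proj z) y + wip lam (proj z) y := by
    intro z y
    rw [wip_sub_left]; ring
  apply Set.Subset.antisymm
  · -- hard direction
    intro x hx
    obtain ⟨hxF, hxI⟩ := hx
    by_contra hnot
    set cube : Set (Fin n → ℝ) := {z | ∀ i, |z i| ≤ 1/2} with hcube
    have hcubeeq : cube = Set.pi Set.univ (fun _ : Fin n => Set.Icc (-(1/2) : ℝ) (1/2)) := by
      ext z
      simp only [hcube, Set.mem_setOf_eq, Set.mem_pi, Set.mem_univ, true_implies,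
        Set.mem_Icc, abs_le]
    have hcube_compact : IsCompact cube := by
      rw [hcubeeq]; exact isCompact_univ_pi fun i => isCompact_Icc
    have hcube_convex : Convex ℝ cube := by
      rw [hcubeeq]; exact convex_pi fun i _ => convex_Icc _ _
    have hKconv : Convex ℝ (proj '' cube) := hcube_convex.linear_image proj
    have hKcl : IsClosed (proj '' cube) :=
      (hcube_compact.image proj.continuous_of_finiteDimensional).isClosed
    obtain ⟨f, u, hfK, hfx⟩ := geometric_hahn_banach_closed_point hKconv hKcl hnot
    -- represent f as wip with w
    set w : Fin n → ℝ := fun i => f (fun j => if i = j then 1 else 0) / lam i with hw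
    have hfw : ∀ y, f y = wip lam w y := by
      intro y
      have h1 : f y = ∑ i, y i • f (fun j => if i = j then 1 else 0) :=
        LinearMap.pi_apply_eq_sum_univ (f.toLinearMap) y
      rw [h1]
      unfold wip
      refine Finset.sum_congr rfl fun i _ => ?_
      have hli : lam i ≠ 0 := ne_of_gt (hlam i)
      rw [hw]
      simp only [smul_eq_mul]
      field_simp
    set p : Fin n → ℝ := proj w with hp
    have hpF : p ∈ latticeSpan L := hmem w
    have hfproj : ∀ z, f (proj z) = wip lam p z := by
      intro z
      rw [hfw]
      rw [hsplit w (proj z)]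
      rw [horth w (proj z) (hmem z)]
      have h2 : wip lam p (z - proj z) = 0 := by
        rw [wip_comm]
        exact horth z p hpF
      rw [← hp]
      have h3 : wip lam p z = wip lam p (z - proj z) + wip lam p (proj z) := by
        rw [wip_sub_right]; ring
      rw [h3, h2]
    -- x is its own projection
    have hxproj : proj x = x := by
      have hdF : x - proj x ∈ latticeSpan L := sub_mem hxF (hmem x)
      have hd0 : wip lam (x - proj x) (x - proj x) = 0 := horth x _ hdF
      have := wip_self_zero hlam hd0
      have hx0 : x - proj x = 0 := this
      have := sub_eq_zero.mp hx0
      exact this.symm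
    have hfx' : f x = wip lam p x := by
      conv_lhs => rw [← hxproj]
      exact hfproj x
    -- the maximizing cube point
    set zs : Fin n → ℝ := fun i => if 0 ≤ p i then (1/2 : ℝ) else -(1/2) with hzs
    have hzscube : zs ∈ cube := by
      intro i
      show |if 0 ≤ p i then (1/2 : ℝ) else -(1/2)| ≤ 1/2
      by_cases h : 0 ≤ p i
      · rw [if_pos h, abs_of_nonneg (by norm_num : (0:ℝ) ≤ 1/2)]
      · rw [if_neg h, abs_neg, abs_of_nonneg (by norm_num : (0:ℝ) ≤ 1/2)]
    have hfzs : f (proj zs) = (∑ i, lam i * |p i|) / 2 := by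
      rw [hfproj zs]
      unfold wip
      rw [Finset.sum_div]
      refine Finset.sum_congr rfl fun i _ => ?_
      rw [hzs]
      by_cases h : 0 ≤ p i
      · rw [abs_of_nonneg h]; simp [h]; ring
      · rw [abs_of_neg (lt_of_not_ge h)]; simp [h]; ring
    have hlt : f (proj zs) < u := hfK (proj zs) ⟨zs, hzscube, rfl⟩
    have hineq := dv_ineq_real hL hxI p hpF
    rw [wip_comm] at hineq
    rw [hfx'] at hfx
    rw [hfzs] at hlt
    linarith
  · -- easy direction
    rintro y ⟨z, hz, rfl⟩
    refine ⟨hmem z, fun v hv => ?_⟩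
    have hvF : icast v ∈ latticeSpan L :=
      Submodule.subset_span ⟨v, hv, rfl⟩
    have h1 : wip lam (proj z) (icast v) = wip lam z (icast v) := by
      have := hsplit z (icast v)
      rw [horth z (icast v) hvF] at this
      linarith
    rw [h1]
    unfold wip
    rw [Finset.sum_div]
    refine Finset.sum_le_sum fun i _ => ?_
    have hzi : |z i| ≤ 1/2 := hz i
    have hli := hlam i
    set c : ℝ := ((v i : ℤ) : ℝ) with hc
    have habs : |c| ≤ c^2 := by
      rcases eq_or_ne (v i) 0 with h | h
      · simp [hc, h]
      · have h1 : (1:ℤ) ≤ |v i| := Int.one_le_abs h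
        have h2 : (1:ℝ) ≤ |c| := by
          rw [hc, ← Int.cast_abs]; exact_mod_cast h1
        nlinarith [abs_nonneg c, sq_abs c]
    have hzc : z i * c ≤ |c| / 2 := by
      calc z i * c ≤ |z i * c| := le_abs_self _
        _ = |z i| * |c| := abs_mul _ _
        _ ≤ (1/2) * |c| := by nlinarith [abs_nonneg c]
        _ = |c| / 2 := by ring
    have : z i * c ≤ c * c / 2 := by nlinarith [sq_nonneg c]
    show lam i * z i * c ≤ lam i * c * c / 2
    nlinarith

end Main
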